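/- (Error bound on the source-like distribution.) Let D_S be a probability measure on X with measurable ground-truth labeling y : X → {1,…,C}, with D_S{y = i} > 0 for each i, and class-conditionals D_{S_i}; let D_T be another probability measure on X. Let h, h_pl : X → {1,…,C} be measurable classifiers and q, γ ∈ (0,1). Define I = {i : P_{D_{S_i}}[h ≠ h_pl] − ε_{D_{S_i}}(h_pl) ≤ γ}. Assume that for each i ∈ I one has P_{D_{S_i}}[M1^i] + P_{D_{S_i}}[M2^i] ≤ q, and that P_{D_S}[h ≠ h_pl] ≤ P_{D_T}[h ≠ h_pl]. Then ε_{D_S}(h) ≤ ((1+γ)/γ)·(P_{D_T}[h ≠ h_pl] − ε_{D_S}(h_pl) + q) + q. -/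

import Mathlib

open MeasureTheory ProbabilityTheory Set

open scoped ProbabilityTheory

noncomputable section

section Aux

variable {X : Type*} [MeasurableSpace X] (μ : Measure X) [IsProbabilityMeasure μ]

lemma aux_tri {s t u : Set X} (hsub : s ⊆ t ∪ u) :
    (μ s).toReal ≤ (μ t).toReal + (μ u).toReal := by
  have h1 : μ s ≤ μ t + μ u := (measure_mono hsub).trans (measure_union_le t u)
  have h2 : μ t + μ u ≠ ⊤ := ENNReal.add_ne_top.2 ⟨measure_ne_top μ t, measure_ne_top μ u⟩
  calc (μ s).toReal ≤ (μ t + μ u).toReal := ENNReal.toReal_mono h2 h1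
    _ = (μ t).toReal + (μ u).toReal :=
        ENNReal.toReal_add (measure_ne_top μ t) (measure_ne_top μ u)

lemma aux_mono {s t : Set X} (hsub : s ⊆ t) : (μ s).toReal ≤ (μ t).toReal :=
  ENNReal.toReal_mono (measure_ne_top μ t) (measure_mono hsub)

end Aux

/-- Error bound on the source-like distribution.
With I = {i : P_{D_{S_i}}[h ≠ h_pl] − ε_{D_{S_i}}(h_pl) ≤ γ}, assuming
P_{D_{S_i}}[M1^i] + P_{D_{S_i}}[M2^i] ≤ q for i ∈ I and
P_{D_S}[h ≠ h_pl] ≤ P_{D_T}[h ≠ h_pl], we get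
ε_{D_S}(h) ≤ ((1+γ)/γ)·(P_{D_T}[h ≠ h_pl] − ε_{D_S}(h_pl) + q) + q. -/
theorem stmt_11 {C : ℕ} {X : Type*} [MeasurableSpace X]
    (DS : Measure X) [IsProbabilityMeasure DS]
    (DT : Measure X) [IsProbabilityMeasure DT]
    (y : X → Fin C) (hy : Measurable y)
    (hpos : ∀ i : Fin C, 0 < DS {x | y x = i})
    (DS_ : Fin C → Measure X) (hDS_ : ∀ i, DS_ i = DS[|{x | y x = i}])
    (h h_pl : X → Fin C) (hh : Measurable h) (hhpl : Measurable h_pl)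
    (q γ : ℝ) (hq : q ∈ Set.Ioo (0 : ℝ) 1) (hγ : γ ∈ Set.Ioo (0 : ℝ) 1)
    (I : Set (Fin C))
    (hI : I = {i | ((DS_ i) {x | h x ≠ h_pl x}).toReal -
      ((DS_ i) {x | h_pl x ≠ y x}).toReal ≤ γ})
    (hM12 : ∀ i ∈ I, ((DS_ i) {x | h x = h_pl x ∧ h x ≠ i}).toReal +
      ((DS_ i) {x | h x ≠ h_pl x ∧ h x ≠ i ∧ h_pl x ≠ i}).toReal ≤ q)
    (hST : (DS {x | h x ≠ h_pl x}).toReal ≤ (DT {x | h x ≠ h_pl x}).toReal) :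
    (DS {x | h x ≠ y x}).toReal ≤
      ((1 + γ) / γ) * ((DT {x | h x ≠ h_pl x}).toReal -
        (DS {x | h_pl x ≠ y x}).toReal + q) + q := by
  classical
  obtain ⟨hq0, hq1⟩ := hq
  obtain ⟨hγ0, hγ1⟩ := hγ
  -- the classes
  set P : Fin C → Set X := fun i => {x | y x = i} with hPdef
  have hPm : ∀ i, MeasurableSet (P i) := fun i => hy (measurableSet_singleton i)
  -- weight of each class, as a real number
  set w : Fin C → ℝ := fun i => (DS (P i)).toReal with hwdef
  have hw0 : ∀ i, 0 < w i := fun i =>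
    ENNReal.toReal_pos (hpos i).ne' (measure_ne_top DS (P i))
  -- conditional measure in terms of DS
  have hcond : ∀ (i : Fin C) (s : Set X),
      ((DS_ i) s).toReal = (DS (P i ∩ s)).toReal / w i := by
    intro i s
    rw [hDS_ i, ProbabilityTheory.cond_apply (hPm i) DS s, ENNReal.toReal_mul,
      ENNReal.toReal_inv]
    rw [div_eq_inv_mul]
  -- abbreviations for the per-class real quantities
  set E : Fin C → ℝ := fun i => (DS (P i ∩ {x | h x ≠ i})).toReal with hEdef
  set A : Fin C → ℝ := fun i => (DS (P i ∩ {x | h x ≠ h_pl x})).toReal with hAdef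
  set B : Fin C → ℝ := fun i => (DS (P i ∩ {x | h_pl x ≠ i})).toReal with hBdef
  -- nonnegativity & boundedness by w
  have hE0 : ∀ i, 0 ≤ E i := fun i => ENNReal.toReal_nonneg
  have hA0 : ∀ i, 0 ≤ A i := fun i => ENNReal.toReal_nonneg
  have hB0 : ∀ i, 0 ≤ B i := fun i => ENNReal.toReal_nonneg
  have hEw : ∀ i, E i ≤ w i := fun i => aux_mono DS inter_subset_left
  -- decomposition of DS over classes
  have hdecomp : ∀ s : Set X, MeasurableSet s →
      (DS s).toReal = ∑ i : Fin C, (DS (P i ∩ s)).toReal := by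
    intro s hs
    have hU : s = ⋃ i ∈ (Finset.univ : Finset (Fin C)), P i ∩ s := by
      ext x
      simp only [Finset.mem_univ, iUnion_true, mem_iUnion, mem_inter_iff]
      exact ⟨fun hx => ⟨y x, rfl, hx⟩, fun ⟨i, _, hx⟩ => hx⟩
    have hd : (↑(Finset.univ : Finset (Fin C)) : Set (Fin C)).PairwiseDisjoint
        (fun i => P i ∩ s) := by
      intro i _ j _ hij
      refine Set.disjoint_left.2 fun x hxi hxj => hij ?_
      have h1 : y x = i := hxi.1
      have h2 : y x = j := hxj.1
      rw [← h1, h2]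
    have hsum := measure_biUnion_finset (μ := DS) hd (fun i _ => (hPm i).inter hs)
    have h2 : DS s = ∑ i : Fin C, DS (P i ∩ s) := by
      conv_lhs => rw [hU]
      exact hsum
    rw [h2]
    exact ENNReal.toReal_sum fun i _ => measure_ne_top DS _
  -- key set rewrites on each class
  have hPy : ∀ i : Fin C, P i ∩ {x | h x ≠ y x} = P i ∩ {x | h x ≠ i} := by
    intro i; ext x
    simp only [mem_inter_iff, mem_setOf_eq, hPdef]
    constructor
    · rintro ⟨h1, h2⟩; exact ⟨h1, by rwa [h1] at h2⟩
    · rintro ⟨h1, h2⟩; exact ⟨h1, by rwa [h1]⟩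
  have hPply : ∀ i : Fin C, P i ∩ {x | h_pl x ≠ y x} = P i ∩ {x | h_pl x ≠ i} := by
    intro i; ext x
    simp only [mem_inter_iff, mem_setOf_eq, hPdef]
    constructor
    · rintro ⟨h1, h2⟩; exact ⟨h1, by rwa [h1] at h2⟩
    · rintro ⟨h1, h2⟩; exact ⟨h1, by rwa [h1]⟩
  -- measurability of relevant sets
  have hmne : MeasurableSet {x | h x ≠ h_pl x} := by
    have : {x | h x = h_pl x} = ⋃ i : Fin C, h ⁻¹' {i} ∩ h_pl ⁻¹' {i} := by
      ext x; simp only [mem_setOf_eq, mem_iUnion, mem_inter_iff, mem_preimage,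
        mem_singleton_iff]
      exact ⟨fun hx => ⟨h x, rfl, hx.symm⟩, fun ⟨i, h1, h2⟩ => h1.trans h2.symm⟩
    have hm : MeasurableSet {x | h x = h_pl x} := by
      rw [this]
      exact MeasurableSet.iUnion fun i =>
        (hh (measurableSet_singleton i)).inter (hhpl (measurableSet_singleton i))
    exact hm.compl
  have hmhy : MeasurableSet {x | h x ≠ y x} := by
    have : {x | h x = y x} = ⋃ i : Fin C, h ⁻¹' {i} ∩ y ⁻¹' {i} := by
      ext x; simp only [mem_setOf_eq, mem_iUnion, mem_inter_iff, mem_preimage,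
        mem_singleton_iff]
      exact ⟨fun hx => ⟨h x, rfl, hx.symm⟩, fun ⟨i, h1, h2⟩ => h1.trans h2.symm⟩
    have hm : MeasurableSet {x | h x = y x} := by
      rw [this]
      exact MeasurableSet.iUnion fun i =>
        (hh (measurableSet_singleton i)).inter (hy (measurableSet_singleton i))
    exact hm.compl
  have hmply : MeasurableSet {x | h_pl x ≠ y x} := by
    have : {x | h_pl x = y x} = ⋃ i : Fin C, h_pl ⁻¹' {i} ∩ y ⁻¹' {i} := by
      ext x; simp only [mem_setOf_eq, mem_iUnion, mem_inter_iff, mem_preimage,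
        mem_singleton_iff]
      exact ⟨fun hx => ⟨h_pl x, rfl, hx.symm⟩, fun ⟨i, h1, h2⟩ => h1.trans h2.symm⟩
    have hm : MeasurableSet {x | h_pl x = y x} := by
      rw [this]
      exact MeasurableSet.iUnion fun i =>
        (hhpl (measurableSet_singleton i)).inter (hy (measurableSet_singleton i))
    exact hm.compl
  -- global sums
  have hSsum : (DS {x | h x ≠ y x}).toReal = ∑ i, E i := by
    rw [hdecomp _ hmhy]
    exact Finset.sum_congr rfl fun i _ => by rw [hEdef]; simp only; rw [hPy i]
  have hBsum : (DS {x | h_pl x ≠ y x}).toReal = ∑ i, B i := by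
    rw [hdecomp _ hmply]
    exact Finset.sum_congr rfl fun i _ => by rw [hBdef]; simp only; rw [hPply i]
  have hAsum : (DS {x | h x ≠ h_pl x}).toReal = ∑ i, A i := hdecomp _ hmne
  have hwsum : (∑ i, w i) = 1 := by
    have h1 : (DS (univ : Set X)).toReal = ∑ i, (DS (P i ∩ univ)).toReal :=
      hdecomp univ MeasurableSet.univ
    simp only [inter_univ] at h1
    rw [← hwdef] at h1
    simpa using h1.symm
  -- per-class triangle inequalities
  have hf1 : ∀ i, A i ≤ E i + B i := by
    intro i
    refine aux_tri DS ?_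
    rintro x ⟨hx1, hx2⟩
    by_cases hc : h x = i
    · right; exact ⟨hx1, fun hp => hx2 (by rw [hc, hp])⟩
    · left; exact ⟨hx1, hc⟩
  have hf2 : ∀ i, B i ≤ E i + A i := by
    intro i
    refine aux_tri DS ?_
    rintro x ⟨hx1, hx2⟩
    by_cases hc : h x = h_pl x
    · left; exact ⟨hx1, fun hp => hx2 (by rw [← hc, hp])⟩
    · right; exact ⟨hx1, hc⟩
  -- the per-class bound on I
  have hf3 : ∀ i ∈ I, E i ≤ A i - B i + 2 * q * w i := by
    intro i hiI
    -- M1, M2, M3 real masses within class i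
    set M1 : Set X := {x | h x = h_pl x ∧ h x ≠ i} with hM1def
    set M2 : Set X := {x | h x ≠ h_pl x ∧ h x ≠ i ∧ h_pl x ≠ i} with hM2def
    set M3 : Set X := {x | h x ≠ h_pl x ∧ h x ≠ i ∧ h_pl x = i} with hM3def
    set m1 : ℝ := (DS (P i ∩ M1)).toReal with hm1def
    set m2 : ℝ := (DS (P i ∩ M2)).toReal with hm2def
    set m3 : ℝ := (DS (P i ∩ M3)).toReal with hm3def
    -- from hM12 : m1 + m2 ≤ q * w i
    have hm12 : m1 + m2 ≤ q * w i := by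
      have := hM12 i hiI
      rw [hcond i M1, hcond i M2] at this
      have hwi := hw0 i
      rw [← add_div, div_le_iff₀ hwi] at this
      · exact this
    -- E i ≤ m1 + m2 + m3
    have hEm : E i ≤ m1 + (m2 + m3) := by
      have h1 : P i ∩ {x | h x ≠ i} ⊆ (P i ∩ M1) ∪ ((P i ∩ M2) ∪ (P i ∩ M3)) := by
        rintro x ⟨hx1, hx2⟩
        by_cases hc : h x = h_pl x
        · left; exact ⟨hx1, hc, hx2⟩
        · by_cases hd : h_pl x = i
          · right; right; exact ⟨hx1, hc, hx2, hd⟩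
          · right; left; exact ⟨hx1, hc, hx2, hd⟩
      calc E i ≤ (DS (P i ∩ M1)).toReal + (DS ((P i ∩ M2) ∪ (P i ∩ M3))).toReal :=
            aux_tri DS h1
        _ ≤ m1 + (m2 + m3) := by
            have := aux_tri DS (Subset.refl ((P i ∩ M2) ∪ (P i ∩ M3)))
            linarith [this]
    -- m3 + B i ≤ A i + m1
    have hm3B : m3 + B i ≤ A i + m1 := by
      -- disjoint union: (P i ∩ M3) and (P i ∩ {h_pl ≠ i}) are disjoint
      have hdisj : Disjoint (P i ∩ M3) (P i ∩ {x | h_pl x ≠ i}) := by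
        refine Set.disjoint_left.2 ?_
        rintro x ⟨_, _, _, hx3⟩ ⟨_, hx4⟩
        exact hx4 hx3
      have hMm : MeasurableSet (P i ∩ {x | h_pl x ≠ i}) := by
        have : {x | h_pl x ≠ i} = (h_pl ⁻¹' {i})ᶜ := by
          ext x; simp [mem_preimage]
        rw [this]
        exact (hPm i).inter (hhpl (measurableSet_singleton i)).compl
      have hunion : DS ((P i ∩ M3) ∪ (P i ∩ {x | h_pl x ≠ i}))
          = DS (P i ∩ M3) + DS (P i ∩ {x | h_pl x ≠ i}) :=
        measure_union hdisj hMm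
      have heq : m3 + B i = (DS ((P i ∩ M3) ∪ (P i ∩ {x | h_pl x ≠ i}))).toReal := by
        rw [hunion, ENNReal.toReal_add (measure_ne_top DS _) (measure_ne_top DS _)]
      rw [heq]
      refine aux_tri DS ?_
      rintro x (⟨hx1, hx2, _, _⟩ | ⟨hx1, hx2⟩)
      · left; exact ⟨hx1, hx2⟩
      · by_cases hc : h x = h_pl x
        · right; exact ⟨hx1, hc, fun he => hx2 (hc ▸ he)⟩
        · left; exact ⟨hx1, hc⟩
    have hm20 : 0 ≤ m2 := ENNReal.toReal_nonneg
    have hm10 : 0 ≤ m1 := ENNReal.toReal_nonneg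
    linarith
  -- the lower bound off I
  have hf4 : ∀ i ∉ I, γ * w i ≤ A i - B i := by
    intro i hiI
    rw [hI] at hiI
    simp only [mem_setOf_eq, not_le] at hiI
    rw [hcond i, hcond i, hPply i] at hiI
    have hwi := hw0 i
    have : γ * w i < A i - B i := by
      rw [← sub_div, lt_div_iff₀ hwi] at hiI
      linarith [hiI]
    linarith
  -- split the sum over I and its complement
  set F : Finset (Fin C) := Finset.univ.filter (· ∈ I) with hFdef
  set G : Finset (Fin C) := Finset.univ.filter (· ∉ I) with hGdef
  have hsplit : ∀ f : Fin C → ℝ, (∑ i, f i) = (∑ i ∈ F, f i) + (∑ i ∈ G, f i) := by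
    intro f
    rw [hFdef, hGdef]
    exact (Finset.sum_filter_add_sum_filter_not Finset.univ (· ∈ I) f).symm
  set SI : ℝ := ∑ i ∈ F, E i with hSIdef
  set SO : ℝ := ∑ i ∈ G, E i with hSOdef
  set TI : ℝ := ∑ i ∈ F, (A i - B i) with hTIdef
  set TO : ℝ := ∑ i ∈ G, (A i - B i) with hTOdef
  set WI : ℝ := ∑ i ∈ F, w i with hWIdef
  set WO : ℝ := ∑ i ∈ G, w i with hWOdef
  have hg1 : SI ≤ TI + 2 * q * WI := by
    have : SI ≤ ∑ i ∈ F, (A i - B i + 2 * q * w i) := by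
      refine Finset.sum_le_sum fun i hi => ?_
      exact hf3 i (by simpa [hFdef] using hi)
    rw [Finset.sum_add_distrib, ← Finset.mul_sum] at this
    linarith
  have hg2 : -SI ≤ TI := by
    have : ∑ i ∈ F, (-(E i)) ≤ ∑ i ∈ F, (A i - B i) :=
      Finset.sum_le_sum fun i _ => by linarith [hf2 i]
    rw [Finset.sum_neg_distrib] at this
    linarith
  have hg3 : γ * WO ≤ TO := by
    have : ∑ i ∈ G, (γ * w i) ≤ ∑ i ∈ G, (A i - B i) := by
      refine Finset.sum_le_sum fun i hi => ?_
      exact hf4 i (by simpa [hGdef] using hi)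
    rw [← Finset.mul_sum] at this
    linarith
  have hg4 : SO ≤ WO := Finset.sum_le_sum fun i _ => hEw i
  have hg5 : WI + WO = 1 := by rw [hWIdef, hWOdef, ← hsplit]; exact hwsum
  have hWI0 : 0 ≤ WI := Finset.sum_nonneg fun i _ => (hw0 i).le
  have hWO0 : 0 ≤ WO := Finset.sum_nonneg fun i _ => (hw0 i).le
  have hSI0 : 0 ≤ SI := Finset.sum_nonneg fun i _ => hE0 i
  have hSO0 : 0 ≤ SO := Finset.sum_nonneg fun i _ => hE0 i
  -- total quantities
  set AT : ℝ := (DT {x | h x ≠ h_pl x}).toReal with hATdef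
  set Btot : ℝ := (DS {x | h_pl x ≠ y x}).toReal with hBtotdef
  have hg6 : TI + TO ≤ AT - Btot := by
    have h1 : TI + TO = (∑ i, A i) - (∑ i, B i) := by
      have ha : TI + TO = ∑ i, (A i - B i) := (hsplit fun i => A i - B i).symm
      rw [ha, Finset.sum_sub_distrib]
    have h2 : (∑ i, A i) ≤ AT := by rw [← hAsum]; exact hST
    have h3 : Btot = ∑ i, B i := hBsum
    linarith
  have hS : (DS {x | h x ≠ y x}).toReal = SI + SO := by
    rw [hSsum, hsplit E]
  rw [hS]
  -- final algebra
  have hkey : γ * (SI + SO) ≤ (1 + γ) * ((AT - Btot) + q) + q * γ := by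
    have e1 : γ * SI ≤ γ * TI + 2 * q * γ * WI := by
      have := mul_le_mul_of_nonneg_left hg1 hγ0.le
      nlinarith [this]
    have e2 : γ * SO ≤ γ * WO := mul_le_mul_of_nonneg_left hg4 hγ0.le
    have e3 : γ * WO ≤ TO := hg3
    have e4 : 0 ≤ TO := le_trans (by positivity) hg3
    have e5 : -(q * WI) ≤ TI := by linarith [hg1, hg2]
    have e6 : WI ≤ 1 := by linarith
    have p1 : 0 ≤ q * γ * (1 - WI) := mul_nonneg (mul_nonneg hq0.le hγ0.le) (by linarith)
    have p2 : 0 ≤ q * (1 - WI) := mul_nonneg hq0.le (by linarith)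
    have p3 : 0 ≤ γ * TO := mul_nonneg hγ0.le e4
    have p4 : 0 ≤ (1 + γ) * ((AT - Btot) - TI - TO) :=
      mul_nonneg (by linarith) (by linarith [hg6])
    linarith only [e1, e2, e3, e5, p1, p2, p3, p4]
  have hrw : ((1 + γ) / γ) * ((AT - Btot) + q) + q
      = ((1 + γ) * ((AT - Btot) + q) + q * γ) / γ := by
    field_simp
  rw [hrw, le_div_iff₀ hγ0]
  linarith [hkey]
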